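/- arXiv:2506.22261 — 4 statements merged into one kernel-verified Lean document; each statement's English description precedes it below -/
import Mathlib

section
/- Let 𝒢 = (V, E₁, E₂) be a 2-multimode graph. Fix a vertex z ∈ V and let X = {v ∈ V : d₁(v,z) < d₂(v,z)} and Y = V \ X (note z ∈ Y). Assume X is nonempty. Let α₀ = max_{v∈X} d₁(z,v) and β₀ = max_{v∈Y} d₂(z,v). Let y ∈ Y be a vertex maximizing d₁(v, X) over v ∈ Y, and let x ∈ X be a vertex maximizing d₂(v, Y) over v ∈ X. Then the quantity D̃ = max(d_𝒢(x,y), α₀, β₀) satisfies D(𝒢)/3 ≤ D̃ ≤ D(𝒢). -/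
/-- The linear-time 3-approximation for the 2-mode diameter.
Given a 2-multimode graph (two connected simple graphs `G₁, G₂` on a finite
vertex set), a vertex `z`, the set `X` of vertices strictly closer to `z` in
red than in blue (with `Yᶜ = X`'s complement playing the role of `Y`),
the extremal quantities `α₀, β₀`, and vertices `y ∈ Y` maximizing the red
distance to `X` and `x ∈ X` maximizing the blue distance to `Y`, the value
`D̃ = max(d_𝒢(x,y), α₀, β₀)` satisfies `D(𝒢)/3 ≤ D̃ ≤ D(𝒢)`. -/
theorem stmt0 {V : Type*} [Fintype V] (G₁ G₂ : SimpleGraph V)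
    (h₁ : G₁.Connected) (h₂ : G₂.Connected) (z : V)
    (X : Set V) (hX : X = {v | G₁.dist v z < G₂.dist v z})
    (hXne : X.Nonempty)
    (α₀ β₀ : ℕ)
    (hα : α₀ = sSup ((fun v => G₁.dist z v) '' X))
    (hβ : β₀ = sSup ((fun v => G₂.dist z v) '' Xᶜ))
    (x y : V) (hyY : y ∈ Xᶜ)
    (hy : ∀ v ∈ Xᶜ, sInf ((fun u => G₁.dist v u) '' X) ≤ sInf ((fun u => G₁.dist y u) '' X))
    (hxX : x ∈ X)
    (hx : ∀ v ∈ X, sInf ((fun u => G₂.dist v u) '' Xᶜ) ≤ sInf ((fun u => G₂.dist x u) '' Xᶜ))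
    (Dtil Ddiam : ℕ)
    (hDtil : Dtil = max (min (G₁.dist x y) (G₂.dist x y)) (max α₀ β₀))
    (hDiam : Ddiam = sSup {d : ℕ | ∃ u v : V, d = min (G₁.dist u v) (G₂.dist u v)}) :
    (Ddiam : ℝ) / 3 ≤ (Dtil : ℝ) ∧ Dtil ≤ Ddiam := by
  have hzY : z ∈ Xᶜ := by simp [hX, SimpleGraph.dist_self]
  have hYne : Xᶜ.Nonempty := ⟨z, hzY⟩
  have hAfin : ((fun v => G₁.dist z v) '' X).Finite := (Set.toFinite X).image _
  have hα_mem : α₀ ∈ (fun v => G₁.dist z v) '' X := by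
    rw [hα]; exact Nat.sSup_mem (hXne.image _) hAfin.bddAbove
  have hα_ub : ∀ v ∈ X, G₁.dist z v ≤ α₀ := fun v hv => by
    rw [hα]; exact le_csSup hAfin.bddAbove ⟨v, hv, rfl⟩
  have hBfin : ((fun v => G₂.dist z v) '' Xᶜ).Finite := (Set.toFinite Xᶜ).image _
  have hβ_mem : β₀ ∈ (fun v => G₂.dist z v) '' Xᶜ := by
    rw [hβ]; exact Nat.sSup_mem (hYne.image _) hBfin.bddAbove
  have hβ_ub : ∀ v ∈ Xᶜ, G₂.dist z v ≤ β₀ := fun v hv => by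
    rw [hβ]; exact le_csSup hBfin.bddAbove ⟨v, hv, rfl⟩
  have hSfin : {d : ℕ | ∃ u v : V, d = min (G₁.dist u v) (G₂.dist u v)}.Finite := by
    apply (Set.finite_range (fun p : V × V => min (G₁.dist p.1 p.2) (G₂.dist p.1 p.2))).subset
    rintro d ⟨u, v, rfl⟩
    exact ⟨(u, v), rfl⟩
  have le_D : ∀ u v : V, min (G₁.dist u v) (G₂.dist u v) ≤ Ddiam := fun u v => by
    rw [hDiam]; exact le_csSup hSfin.bddAbove ⟨u, v, rfl⟩
  -- upper bound : Dtil ≤ Ddiam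
  have hupper : Dtil ≤ Ddiam := by
    obtain ⟨a, haX, ha⟩ := hα_mem
    obtain ⟨b, hbY, hb⟩ := hβ_mem
    have ha' : G₁.dist z a = α₀ := ha
    have hb' : G₂.dist z b = β₀ := hb
    have haX' : G₁.dist a z < G₂.dist a z := by rwa [hX] at haX
    have hbY' : G₂.dist b z ≤ G₁.dist b z := by
      rw [hX] at hbY; simpa using hbY
    have c1 : G₁.dist z a = G₁.dist a z := SimpleGraph.dist_comm
    have c2 : G₂.dist z a = G₂.dist a z := SimpleGraph.dist_comm
    have c3 : G₁.dist z b = G₁.dist b z := SimpleGraph.dist_comm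
    have c4 : G₂.dist z b = G₂.dist b z := SimpleGraph.dist_comm
    have h1 := le_D z a
    have h2 := le_D z b
    have h3 := le_D x y
    omega
  -- the diameter is attained
  have hmemD : Ddiam ∈ {d : ℕ | ∃ u v : V, d = min (G₁.dist u v) (G₂.dist u v)} := by
    rw [hDiam]
    exact Nat.sSup_mem ⟨min (G₁.dist z z) (G₂.dist z z), z, z, rfl⟩ hSfin.bddAbove
  obtain ⟨u, v, huv⟩ := hmemD
  -- key mixed case lemma
  have key : ∀ u v : V, u ∈ X → v ∈ Xᶜ →
      min (G₁.dist u v) (G₂.dist u v) ≤ 3 * Dtil := by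
    intro u v huX hvY
    -- red route : v → nearest X vertex u' → z → u
    obtain ⟨u', hu'X, hu'⟩ := Nat.sInf_mem (hXne.image (fun w => G₁.dist v w))
    have hu'' : G₁.dist v u' = sInf ((fun w => G₁.dist v w) '' X) := hu'
    have hred : G₁.dist v u ≤ G₁.dist v u' + α₀ + α₀ := by
      have t1 := h₁.dist_triangle (u := v) (v := u') (w := u)
      have t2 := h₁.dist_triangle (u := u') (v := z) (w := u)
      have c1 : G₁.dist u' z = G₁.dist z u' := SimpleGraph.dist_comm
      have e1 : G₁.dist z u' ≤ α₀ := hα_ub u' hu'X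
      have e2 : G₁.dist z u ≤ α₀ := hα_ub u huX
      omega
    have hvy : G₁.dist v u' ≤ G₁.dist x y := by
      have h4 := hy v hvY
      have h5 : sInf ((fun u => G₁.dist y u) '' X) ≤ G₁.dist y x :=
        Nat.sInf_le ⟨x, hxX, rfl⟩
      have c1 : G₁.dist y x = G₁.dist x y := SimpleGraph.dist_comm
      omega
    -- blue route : u → nearest Y vertex v' → z → v
    obtain ⟨v', hv'Y, hv'⟩ := Nat.sInf_mem (hYne.image (fun w => G₂.dist u w))
    have hv'' : G₂.dist u v' = sInf ((fun w => G₂.dist u w) '' Xᶜ) := hv'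
    have hblue : G₂.dist u v ≤ G₂.dist u v' + β₀ + β₀ := by
      have t1 := h₂.dist_triangle (u := u) (v := v') (w := v)
      have t2 := h₂.dist_triangle (u := v') (v := z) (w := v)
      have c1 : G₂.dist v' z = G₂.dist z v' := SimpleGraph.dist_comm
      have e1 : G₂.dist z v' ≤ β₀ := hβ_ub v' hv'Y
      have e2 : G₂.dist z v ≤ β₀ := hβ_ub v hvY
      omega
    have hxv : G₂.dist u v' ≤ G₂.dist x y := by
      have h4 := hx u huX
      have h5 : sInf ((fun u => G₂.dist x u) '' Xᶜ) ≤ G₂.dist x y :=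
        Nat.sInf_le ⟨y, hyY, rfl⟩
      omega
    have hcomm : G₁.dist v u = G₁.dist u v := SimpleGraph.dist_comm
    omega
  have hle3 : Ddiam ≤ 3 * Dtil := by
    by_cases huX : u ∈ X <;> by_cases hvX : v ∈ X
    · have t := h₁.dist_triangle (u := u) (v := z) (w := v)
      have c1 : G₁.dist u z = G₁.dist z u := SimpleGraph.dist_comm
      have e1 : G₁.dist z u ≤ α₀ := hα_ub u huX
      have e2 : G₁.dist z v ≤ α₀ := hα_ub v hvX
      omega
    · have := key u v huX hvX
      omega
    · have := key v u hvX huX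
      have c1 : G₁.dist v u = G₁.dist u v := SimpleGraph.dist_comm
      have c2 : G₂.dist v u = G₂.dist u v := SimpleGraph.dist_comm
      omega
    · have t := h₂.dist_triangle (u := u) (v := z) (w := v)
      have c1 : G₂.dist u z = G₂.dist z u := SimpleGraph.dist_comm
      have e1 : G₂.dist z u ≤ β₀ := hβ_ub u huX
      have e2 : G₂.dist z v ≤ β₀ := hβ_ub v hvX
      omega
  refine ⟨?_, hupper⟩
  rw [div_le_iff₀ (by norm_num : (0:ℝ) < 3)]
  exact_mod_cast (by omega : Ddiam ≤ Dtil * 3)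
end

section
/- Let 𝒢 = (V, E₁, E₂) be a 2-multimode graph, let D > 0 be a real number and 0 < α ≤ 1. Fix vertices x, y ∈ V and define X₁ = B₁(x, (1−α)D/2), Y₁ = B₂(y, (1−α)D/2), X₂ = B₁(x, (1+α)D/2) ∩ Y₁, and Y₂ = B₂(y, (1+α)D/2) ∩ X₁. Then for every a ∈ X₁ \ Y₂ and every b ∈ Y₁ \ X₂ one has d₁(a,b) ≥ αD and d₂(a,b) ≥ αD, and hence d_𝒢(a,b) ≥ αD. -/
/-- For a 2-multimode graph, vertices `x, y`, and the sets
`X₁ = B₁(x,(1−α)D/2)`, `Y₁ = B₂(y,(1−α)D/2)`, `X₂ = B₁(x,(1+α)D/2) ∩ Y₁`,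
`Y₂ = B₂(y,(1+α)D/2) ∩ X₁`, any `a ∈ X₁ \ Y₂` and `b ∈ Y₁ \ X₂` satisfy
`d₁(a,b) ≥ αD`, `d₂(a,b) ≥ αD`, and hence `d_𝒢(a,b) ≥ αD`. -/
theorem stmt1 {V : Type*} [Fintype V] (G₁ G₂ : SimpleGraph V)
    (h₁ : G₁.Connected) (h₂ : G₂.Connected)
    (D α : ℝ) (hD : 0 < D) (hα₀ : 0 < α) (hα₁ : α ≤ 1)
    (x y : V) (X₁ Y₁ X₂ Y₂ : Set V)
    (hX₁ : X₁ = {v | (G₁.dist x v : ℝ) < (1 - α) * D / 2})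
    (hY₁ : Y₁ = {v | (G₂.dist y v : ℝ) < (1 - α) * D / 2})
    (hX₂ : X₂ = {v | (G₁.dist x v : ℝ) < (1 + α) * D / 2} ∩ Y₁)
    (hY₂ : Y₂ = {v | (G₂.dist y v : ℝ) < (1 + α) * D / 2} ∩ X₁)
    (a b : V) (ha : a ∈ X₁ \ Y₂) (hb : b ∈ Y₁ \ X₂) :
    α * D ≤ (G₁.dist a b : ℝ) ∧ α * D ≤ (G₂.dist a b : ℝ) ∧
      α * D ≤ min (G₁.dist a b : ℝ) (G₂.dist a b : ℝ) := by
  subst hX₁ hY₁ hX₂ hY₂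
  obtain ⟨haX, haY⟩ := ha
  obtain ⟨hbY, hbX⟩ := hb
  have haX' : (G₁.dist x a : ℝ) < (1 - α) * D / 2 := haX
  have hbY' : (G₂.dist y b : ℝ) < (1 - α) * D / 2 := hbY
  have ha2 : (1 + α) * D / 2 ≤ (G₂.dist y a : ℝ) :=
    le_of_not_gt (fun h => haY ⟨h, haX⟩)
  have hb1 : (1 + α) * D / 2 ≤ (G₁.dist x b : ℝ) :=
    le_of_not_gt (fun h => hbX ⟨h, hbY⟩)
  have t1 : G₁.dist x b ≤ G₁.dist x a + G₁.dist a b := h₁.dist_triangle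
  have t2 : G₂.dist y a ≤ G₂.dist y b + G₂.dist b a := h₂.dist_triangle
  have t1' : (G₁.dist x b : ℝ) ≤ (G₁.dist x a : ℝ) + (G₁.dist a b : ℝ) := by
    exact_mod_cast t1
  have t2' : (G₂.dist y a : ℝ) ≤ (G₂.dist y b : ℝ) + (G₂.dist b a : ℝ) := by
    exact_mod_cast t2
  rw [SimpleGraph.dist_comm (u := b) (v := a)] at t2'
  have h1 : α * D ≤ (G₁.dist a b : ℝ) := by nlinarith
  have h2 : α * D ≤ (G₂.dist a b : ℝ) := by nlinarith
  exact ⟨h1, h2, le_min h1 h2⟩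
end

section
/- Let 𝒢 = (V, E₁, E₂) be a 2-multimode graph, let D be a positive integer, and let α be a real number with 1/3 < α ≤ 1/2 such that r := (1−α)D/2 is a natural number. Suppose s, t ∈ V satisfy d₁(s,t) ≥ D and d₂(s,t) ≥ D, and z ∈ V satisfies d_𝒢(z,v) < αD for every vertex v ∈ V. Then there exist vertices x ∈ B₁(z, (3α−1)D/2) and y ∈ B₂(z, (3α−1)D/2) such that either (d₁(x,s) ≤ r and d₂(y,t) ≤ r) or (d₁(x,t) ≤ r and d₂(y,s) ≤ r). -/
/-- Along any walk from `z` to `s` one can find a vertex `x` within distance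
`n` of `z` and within distance `length - n` of `s`. -/
lemma stmt5_aux_walk {V : Type*} (G : SimpleGraph V) (hG : G.Connected) (n : ℕ) :
    ∀ {z s : V} (p : G.Walk z s), ∃ x : V, G.dist z x ≤ n ∧ G.dist x s ≤ p.length - n := by
  induction n with
  | zero =>
    intro z s p
    exact ⟨z, by simp, by simpa using SimpleGraph.dist_le p⟩
  | succ n ih =>
    intro z s p
    cases p with
    | nil => exact ⟨z, by simp [SimpleGraph.dist_self], by simp [SimpleGraph.dist_self]⟩
    | cons h q =>
      obtain ⟨x, hx1, hx2⟩ := ih q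
      refine ⟨x, ?_, ?_⟩
      · calc G.dist z x ≤ G.dist z _ + G.dist _ x := hG.dist_triangle
          _ ≤ 1 + n := add_le_add (SimpleGraph.dist_le h.toWalk) hx1
          _ = n + 1 := by omega
      · simpa [SimpleGraph.Walk.length_cons, Nat.succ_sub_succ] using hx2

lemma stmt5_aux {V : Type*} (G : SimpleGraph V) (hG : G.Connected) (z w : V) (n : ℕ) :
    ∃ x : V, G.dist z x ≤ G.dist z w - n ∧ G.dist x w ≤ n := by
  obtain ⟨p, hp⟩ := hG.exists_walk_length_eq_dist z w
  obtain ⟨x, hx1, hx2⟩ := stmt5_aux_walk G hG (G.dist z w - n) p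
  exact ⟨x, hx1, by rw [hp] at hx2; omega⟩

/-- If `d₁(s,t) ≥ D`, `d₂(s,t) ≥ D` and `z` has 2-mode distance
`< αD` from every vertex (with `1/3 < α ≤ 1/2`, `D` a positive integer and
`r = (1−α)D/2 ∈ ℕ`), then there exist `x ∈ B₁(z,(3α−1)D/2)` and
`y ∈ B₂(z,(3α−1)D/2)` with either (`d₁(x,s) ≤ r` and `d₂(y,t) ≤ r`) or
(`d₁(x,t) ≤ r` and `d₂(y,s) ≤ r`). -/
theorem stmt5 {V : Type*} [Fintype V] (G₁ G₂ : SimpleGraph V)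
    (h₁ : G₁.Connected) (h₂ : G₂.Connected)
    (D : ℕ) (hD : 0 < D) (α : ℝ) (hα₁ : 1 / 3 < α) (hα₂ : α ≤ 1 / 2)
    (r : ℕ) (hr : (r : ℝ) = (1 - α) * D / 2)
    (s t z : V)
    (hst₁ : (D : ℝ) ≤ (G₁.dist s t : ℝ)) (hst₂ : (D : ℝ) ≤ (G₂.dist s t : ℝ))
    (hz : ∀ v : V, min (G₁.dist z v : ℝ) (G₂.dist z v : ℝ) < α * D) :
    ∃ x y : V, (G₁.dist z x : ℝ) < (3 * α - 1) * D / 2 ∧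
      (G₂.dist z y : ℝ) < (3 * α - 1) * D / 2 ∧
      ((G₁.dist x s ≤ r ∧ G₂.dist y t ≤ r) ∨ (G₁.dist x t ≤ r ∧ G₂.dist y s ≤ r)) := by
  have hDpos : (0 : ℝ) < (D : ℝ) := by exact_mod_cast hD
  have hpos : (0 : ℝ) < (3 * α - 1) * D / 2 := by
    apply div_pos _ two_pos
    apply mul_pos _ hDpos
    linarith
  -- main helper on the real side
  have key : ∀ (G : SimpleGraph V), G.Connected → ∀ w : V, ((G.dist z w : ℝ) < α * D) →
      ∃ x : V, (G.dist z x : ℝ) < (3 * α - 1) * D / 2 ∧ G.dist x w ≤ r := by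
    intro G hG w hw
    obtain ⟨x, hx1, hx2⟩ := stmt5_aux G hG z w r
    refine ⟨x, ?_, hx2⟩
    rcases le_or_gt r (G.dist z w) with hle | hlt
    · have : (G.dist z x : ℝ) ≤ (G.dist z w : ℝ) - (r : ℝ) := by
        have := hx1
        have h' : ((G.dist z w - r : ℕ) : ℝ) = (G.dist z w : ℝ) - r := by
          push_cast [Nat.cast_sub hle]; ring
        calc (G.dist z x : ℝ) ≤ ((G.dist z w - r : ℕ) : ℝ) := by exact_mod_cast hx1
          _ = (G.dist z w : ℝ) - r := h'
      calc (G.dist z x : ℝ) ≤ (G.dist z w : ℝ) - r := this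
        _ < α * D - (1 - α) * D / 2 := by rw [← hr]; linarith
        _ = (3 * α - 1) * D / 2 := by ring
    · have h0 : G.dist z w - r = 0 := by omega
      have : G.dist z x = 0 := by omega
      rw [this]
      simpa using hpos
  -- case analysis
  have hs := hz s
  have ht := hz t
  rcases min_lt_iff.mp hs with hs1 | hs2
  · rcases min_lt_iff.mp ht with ht1 | ht2
    · -- contradiction: d₁(s,t) ≤ d₁(z,s)+d₁(z,t) < 2αD ≤ D
      exfalso
      have htri : G₁.dist s t ≤ G₁.dist s z + G₁.dist z t := h₁.dist_triangle
      have h1 : (G₁.dist s z : ℝ) = (G₁.dist z s : ℝ) := by rw [G₁.dist_comm]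
      have : (G₁.dist s t : ℝ) ≤ (G₁.dist z s : ℝ) + (G₁.dist z t : ℝ) := by
        calc (G₁.dist s t : ℝ) ≤ ((G₁.dist s z + G₁.dist z t : ℕ) : ℝ) := by exact_mod_cast htri
          _ = (G₁.dist s z : ℝ) + (G₁.dist z t : ℝ) := by push_cast; ring
          _ = (G₁.dist z s : ℝ) + (G₁.dist z t : ℝ) := by rw [h1]
      nlinarith
    · obtain ⟨x, hx1, hx2⟩ := key G₁ h₁ s hs1
      obtain ⟨y, hy1, hy2⟩ := key G₂ h₂ t ht2
      exact ⟨x, y, hx1, hy1, Or.inl ⟨hx2, hy2⟩⟩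
  · rcases min_lt_iff.mp ht with ht1 | ht2
    · obtain ⟨x, hx1, hx2⟩ := key G₁ h₁ t ht1
      obtain ⟨y, hy1, hy2⟩ := key G₂ h₂ s hs2
      exact ⟨x, y, hx1, hy1, Or.inr ⟨hx2, hy2⟩⟩
    · exfalso
      have htri : G₂.dist s t ≤ G₂.dist s z + G₂.dist z t := h₂.dist_triangle
      have h1 : (G₂.dist s z : ℝ) = (G₂.dist z s : ℝ) := by rw [G₂.dist_comm]
      have : (G₂.dist s t : ℝ) ≤ (G₂.dist z s : ℝ) + (G₂.dist z t : ℝ) := by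
        calc (G₂.dist s t : ℝ) ≤ ((G₂.dist s z + G₂.dist z t : ℕ) : ℝ) := by exact_mod_cast htri
          _ = (G₂.dist s z : ℝ) + (G₂.dist z t : ℝ) := by push_cast; ring
          _ = (G₂.dist z s : ℝ) + (G₂.dist z t : ℝ) := by rw [h1]
      nlinarith
end

section
/- Let 𝒢 = (V, E₁, E₂, E₃) be a 3-multimode graph, let D > 0 be a real number, and fix p ∈ V. Define X = B₁(p, D/3), Y = B₂(p, D/3) \ X, X₀ = {y ∈ Y : ∃ x ∈ X, d₁(x,y) < D/3}, Y₀ = {x ∈ X : ∃ y ∈ Y, d₂(x,y) < D/3}, X₁ = X \ Y₀, and Y₁ = Y \ X₀. Suppose there exist x̂ ∈ X₁ and ŷ ∈ Y₁ such that X₁ ⊆ B₃(ŷ, D/3) and Y₁ ⊆ B₃(x̂, D/3). Then for every x ∈ X and y ∈ Y one has d_𝒢(x,y) < D. -/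
/-- In a 3-multimode graph, with the sets `X, Y, X₀, Y₀, X₁, Y₁`
as in the 3-approximation algorithm, if there are `x̂ ∈ X₁` and `ŷ ∈ Y₁` with
`X₁ ⊆ B₃(ŷ, D/3)` and `Y₁ ⊆ B₃(x̂, D/3)`, then every `x ∈ X` and `y ∈ Y`
satisfy `d_𝒢(x,y) < D`. -/
theorem stmt14 {V : Type*} [Fintype V] (G₁ G₂ G₃ : SimpleGraph V)
    (h₁ : G₁.Connected) (h₂ : G₂.Connected) (h₃ : G₃.Connected)
    (D : ℝ) (hD : 0 < D) (p : V)
    (X Y X₀ Y₀ X₁ Y₁ : Set V)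
    (hX : X = {v | (G₁.dist p v : ℝ) < D / 3})
    (hY : Y = {v | (G₂.dist p v : ℝ) < D / 3} \ X)
    (hX₀ : X₀ = {y ∈ Y | ∃ x ∈ X, (G₁.dist x y : ℝ) < D / 3})
    (hY₀ : Y₀ = {x ∈ X | ∃ y ∈ Y, (G₂.dist x y : ℝ) < D / 3})
    (hX₁ : X₁ = X \ Y₀) (hY₁ : Y₁ = Y \ X₀)
    (xh yh : V) (hxh : xh ∈ X₁) (hyh : yh ∈ Y₁)
    (hX₁sub : X₁ ⊆ {v | (G₃.dist yh v : ℝ) < D / 3})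
    (hY₁sub : Y₁ ⊆ {v | (G₃.dist xh v : ℝ) < D / 3}) :
    ∀ x ∈ X, ∀ y ∈ Y,
      min (G₁.dist x y : ℝ) (min (G₂.dist x y : ℝ) (G₃.dist x y : ℝ)) < D := by
  intro x hx y hy
  by_cases hyX₀ : y ∈ X₀
  · -- use mode 1
    rw [hX₀] at hyX₀
    obtain ⟨-, x', hx', hx'y⟩ := hyX₀
    have hpx : (G₁.dist p x : ℝ) < D / 3 := by rw [hX] at hx; exact hx
    have hpx' : (G₁.dist p x' : ℝ) < D / 3 := by rw [hX] at hx'; exact hx'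
    have tri : (G₁.dist x y : ℝ) ≤ G₁.dist p x + G₁.dist p x' + G₁.dist x' y := by
      have t1 : G₁.dist x y ≤ G₁.dist x x' + G₁.dist x' y := h₁.dist_triangle
      have t2 : G₁.dist x x' ≤ G₁.dist x p + G₁.dist p x' := h₁.dist_triangle
      have := le_trans t1 (Nat.add_le_add_right t2 _)
      rw [G₁.dist_comm (u := x) (v := p)] at this
      exact_mod_cast this
    exact lt_of_le_of_lt (min_le_left _ _) (by linarith)
  · by_cases hxY₀ : x ∈ Y₀
    · rw [hY₀] at hxY₀
      obtain ⟨-, y', hy', hxy'⟩ := hxY₀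
      have hpy : (G₂.dist p y : ℝ) < D / 3 := by rw [hY] at hy; exact hy.1
      have hpy' : (G₂.dist p y' : ℝ) < D / 3 := by rw [hY] at hy'; exact hy'.1
      have tri : (G₂.dist x y : ℝ) ≤ G₂.dist x y' + G₂.dist p y' + G₂.dist p y := by
        have t1 : G₂.dist x y ≤ G₂.dist x p + G₂.dist p y := h₂.dist_triangle
        have t2 : G₂.dist x p ≤ G₂.dist x y' + G₂.dist y' p := h₂.dist_triangle
        have := le_trans t1 (Nat.add_le_add_right t2 _)
        rw [G₂.dist_comm (u := y') (v := p)] at this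
        exact_mod_cast this
      have : (G₂.dist x y : ℝ) < D := by linarith
      exact lt_of_le_of_lt (le_trans (min_le_right _ _) (min_le_left _ _)) this
    · -- mode 3
      have hx1 : x ∈ X₁ := by rw [hX₁]; exact ⟨hx, hxY₀⟩
      have hy1 : y ∈ Y₁ := by rw [hY₁]; exact ⟨hy, hyX₀⟩
      have h1 : (G₃.dist yh x : ℝ) < D / 3 := hX₁sub hx1
      have h2 : (G₃.dist xh y : ℝ) < D / 3 := hY₁sub hy1
      have h3 : (G₃.dist yh xh : ℝ) < D / 3 := hX₁sub hxh
      have tri : (G₃.dist x y : ℝ) ≤ G₃.dist yh x + G₃.dist yh xh + G₃.dist xh y := by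
        have t1 : G₃.dist x y ≤ G₃.dist x xh + G₃.dist xh y := h₃.dist_triangle
        have t2 : G₃.dist x xh ≤ G₃.dist x yh + G₃.dist yh xh := h₃.dist_triangle
        have := le_trans t1 (Nat.add_le_add_right t2 _)
        rw [G₃.dist_comm (u := x) (v := yh)] at this
        exact_mod_cast this
      have : (G₃.dist x y : ℝ) < D := by linarith
      exact lt_of_le_of_lt (le_trans (min_le_right _ _) (min_le_right _ _)) this
end
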